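/- Let 0 < μ < 1/m_φ and assume F attains a finite minimal value F*. If F is level-coercive, i.e., there exist α > 0 and r ∈ ℝ such that F(x) ≥ α‖x‖ + r for all x ∈ ℝⁿ, then F_μ is level-bounded. -/

import Mathlib

open scoped RealInnerProductSpace

noncomputable section

/-- `ℝⁿ` with the Euclidean norm. -/
abbrev En (n : ℕ) := EuclideanSpace ℝ (Fin n)

/-- `φ` is proper: finite somewhere and never `⊥`. -/
def ProperE {n : ℕ} (φ : En n → EReal) : Prop :=
  (∃ x, φ x ≠ ⊤) ∧ ∀ x, φ x ≠ ⊥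

/-- `φ` is `m`-weakly convex: `x ↦ φ x + (m/2)‖x‖²` is convex. -/
def WeaklyConvexOn {n : ℕ} (φ : En n → EReal) (m : ℝ) : Prop :=
  ∀ x y : En n, ∀ a b : ℝ, 0 ≤ a → 0 ≤ b → a + b = 1 →
    φ (a • x + b • y) + (((m / 2) * ‖a • x + b • y‖ ^ 2 : ℝ) : EReal) ≤
      (a : EReal) * (φ x + (((m / 2) * ‖x‖ ^ 2 : ℝ) : EReal)) +
        (b : EReal) * (φ y + (((m / 2) * ‖y‖ ^ 2 : ℝ) : EReal))

/-- `Mφ` is the Moreau envelope of `φ` with parameter `μ` and `xφ` the associated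
(unique) proximal mapping. -/
def IsMoreau {n : ℕ} (φ : En n → EReal) (μ : ℝ) (Mφ : En n → ℝ) (xφ : En n → En n) : Prop :=
  ∀ z : En n,
    (Mφ z : EReal) = φ (xφ z) + ((‖xφ z - z‖ ^ 2 / (2 * μ) : ℝ) : EReal) ∧
    (∀ x, (Mφ z : EReal) ≤ φ x + ((‖x - z‖ ^ 2 / (2 * μ) : ℝ) : EReal)) ∧
    (∀ x, φ x + ((‖x - z‖ ^ 2 / (2 * μ) : ℝ) : EReal) = (Mφ z : EReal) → x = xφ z)

/-- Real-valued version, for the convex function `g`. -/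
def IsMoreauR {n : ℕ} (g : En n → ℝ) (μ : ℝ) (Mg : En n → ℝ) (xg : En n → En n) : Prop :=
  ∀ z : En n,
    Mg z = g (xg z) + ‖xg z - z‖ ^ 2 / (2 * μ) ∧
    (∀ x, Mg z ≤ g x + ‖x - z‖ ^ 2 / (2 * μ)) ∧
    (∀ x, g x + ‖x - z‖ ^ 2 / (2 * μ) = Mg z → x = xg z)

/-- An extended-real-valued function is level-bounded if all its sublevel sets are bounded. -/
def LevelBoundedE {n : ℕ} (H : En n → EReal) : Prop :=
  ∀ α : ℝ, Bornology.IsBounded {x : En n | H x ≤ (α : EReal)}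

/-- A real-valued function is level-bounded if all its sublevel sets are bounded. -/
def LevelBoundedR {n : ℕ} (H : En n → ℝ) : Prop :=
  ∀ α : ℝ, Bornology.IsBounded {x : En n | H x ≤ α}

set_option maxHeartbeats 1000000 in
/-- if `F` is level-coercive then `F_μ` is level-bounded. -/
theorem stmt10 {n : ℕ} (φ : En n → EReal) (g : En n → ℝ) (mφ μ : ℝ)
    (hproper : ProperE φ) (hlsc : LowerSemicontinuous φ)
    (hmφ : 0 ≤ mφ) (hweak : WeaklyConvexOn φ mφ)
    (hg : ConvexOn ℝ Set.univ g)
    (hμ : 0 < μ) (hμm : μ * mφ < 1)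
    (Fstar : ℝ)
    (hmin : ∃ xs : En n, φ xs - ((g xs : ℝ) : EReal) = (Fstar : EReal) ∧
      ∀ x, (Fstar : EReal) ≤ φ x - ((g x : ℝ) : EReal))
    (Mφ : En n → ℝ) (xφ : En n → En n) (hφprox : IsMoreau φ μ Mφ xφ)
    (Mg : En n → ℝ) (xg : En n → En n) (hgprox : IsMoreauR g μ Mg xg)
    (α r : ℝ) (hα : 0 < α)
    (hcoercive : ∀ x : En n, ((α * ‖x‖ + r : ℝ) : EReal) ≤ φ x - ((g x : ℝ) : EReal)) :
    LevelBoundedR (fun z => Mφ z - Mg z) := by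
  intro β
  classical
  have hgc : Continuous g := hg.locallyLipschitz.continuous
  set B : ℝ := β - r with hBdef
  set R : ℝ := B / α + 2 * Real.sqrt (μ * B) with hRdef
  obtain ⟨C₁, hC₁⟩ : ∃ C, ∀ x ∈ Metric.closedBall (0 : En n) (R + 1), g x ≤ C := by
    obtain ⟨C, hC⟩ := ((isCompact_closedBall (0 : En n) (R + 1)).image hgc).bddAbove
    exact ⟨C, fun x hx => hC ⟨x, hx, rfl⟩⟩
  obtain ⟨C₂, hC₂⟩ : ∃ C, ∀ x ∈ Metric.closedBall (0 : En n) (R + 1), C ≤ g x := by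
    obtain ⟨C, hC⟩ := ((isCompact_closedBall (0 : En n) (R + 1)).image hgc).bddBelow
    exact ⟨C, fun x hx => hC ⟨x, hx, rfl⟩⟩
  apply (Metric.isBounded_closedBall (x := (0 : En n))
    (r := R + (μ * (C₁ - C₂) + 1))).subset
  intro z hz
  simp only [Set.mem_setOf_eq] at hz
  set v := xφ z with hvdef
  set u := xg z with hudef
  obtain ⟨hMφ_eq, hMφ_le, -⟩ := hφprox z
  obtain ⟨hMg_eq, hMg_le, -⟩ := hgprox z
  have h2μ : (0 : ℝ) < 2 * μ := by linarith
  have h4μ : (0 : ℝ) < 4 * μ := by linarith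
  have ediv : ∀ x : ℝ, 2 * μ * (x / (2 * μ)) = x := fun x => by field_simp
  -- φ v is finite
  have hvbot : φ v ≠ ⊥ := hproper.2 v
  have hvtop : φ v ≠ ⊤ := by
    intro h
    rw [h] at hMφ_eq
    rw [EReal.top_add_of_ne_bot (by exact_mod_cast EReal.coe_ne_bot _)] at hMφ_eq
    exact EReal.coe_ne_top _ hMφ_eq
  set p : ℝ := (φ v).toReal with hpdef
  have hp : φ v = (p : EReal) := (EReal.coe_toReal hvtop hvbot).symm
  have hMφz : Mφ z = p + ‖v - z‖ ^ 2 / (2 * μ) := by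
    rw [hp] at hMφ_eq
    exact_mod_cast hMφ_eq
  -- coercivity at v
  have hco : α * ‖v‖ + r ≤ p - g v := by
    have h := hcoercive v
    rw [hp, ← EReal.coe_sub] at h
    exact_mod_cast h
  -- Mg z ≤ g v + ‖v-z‖²/(2μ)
  have hMgv := hMg_le v
  -- strong convexity at the midpoint: g v + ‖v-z‖²/(2μ) ≥ Mg z + ‖v-u‖²/(4μ)
  have key : Mg z + ‖v - u‖ ^ 2 / (4 * μ) ≤ g v + ‖v - z‖ ^ 2 / (2 * μ) := by
    have hm := hMg_le ((1 / 2 : ℝ) • v + (1 / 2 : ℝ) • u)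
    have hgm : g ((1 / 2 : ℝ) • v + (1 / 2 : ℝ) • u) ≤ (1 / 2) * g v + (1 / 2) * g u :=
      hg.2 (Set.mem_univ v) (Set.mem_univ u) (by norm_num) (by norm_num) (by norm_num)
    have hpar : ‖(1 / 2 : ℝ) • v + (1 / 2 : ℝ) • u - z‖ ^ 2
        = ‖v - z‖ ^ 2 / 2 + ‖u - z‖ ^ 2 / 2 - ‖v - u‖ ^ 2 / 4 := by
      have h1 : (1 / 2 : ℝ) • v + (1 / 2 : ℝ) • u - z = (1 / 2 : ℝ) • ((v - z) + (u - z)) := by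
        module
      have h2 := norm_add_sq_real (v - z) (u - z)
      have h3 := norm_sub_sq_real (v - z) (u - z)
      have h4 : (v - z) - (u - z) = v - u := by abel
      rw [h4] at h3
      have hn : ‖(1 / 2 : ℝ)‖ = 1 / 2 := by rw [Real.norm_eq_abs]; norm_num
      rw [h1, norm_smul, hn]
      linear_combination (1 / 4) * h2 + (1 / 4) * h3
    rw [hpar] at hm
    rw [hMg_eq] at hm ⊢
    -- multiply hm by 2μ
    have hm' := mul_le_mul_of_nonneg_left hm h2μ.le
    rw [mul_add, mul_add, ediv, ediv] at hm'
    have hgm' := mul_le_mul_of_nonneg_left hgm h2μ.le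
    -- goal: g u + ‖u-z‖²/(2μ) + ‖v-u‖²/(4μ) ≤ g v + ‖v-z‖²/(2μ)
    rw [← mul_le_mul_iff_right₀ h4μ]
    have e1 : 4 * μ * (g u + ‖u - z‖ ^ 2 / (2 * μ) + ‖v - u‖ ^ 2 / (4 * μ))
        = 4 * μ * g u + 2 * ‖u - z‖ ^ 2 + ‖v - u‖ ^ 2 := by
      field_simp; ring
    have e2 : 4 * μ * (g v + ‖v - z‖ ^ 2 / (2 * μ))
        = 4 * μ * g v + 2 * ‖v - z‖ ^ 2 := by
      field_simp; ring
    rw [e1, e2]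
    nlinarith [hm', hgm']
  -- chain
  have hchain : α * ‖v‖ + r + ‖v - u‖ ^ 2 / (4 * μ) ≤ β := by linarith
  have hnn1 : 0 ≤ α * ‖v‖ := mul_nonneg hα.le (norm_nonneg v)
  have hnn2 : 0 ≤ ‖v - u‖ ^ 2 / (4 * μ) := div_nonneg (sq_nonneg _) h4μ.le
  have hB0 : 0 ≤ B := by rw [hBdef]; linarith
  have hv : ‖v‖ ≤ B / α := by
    rw [le_div_iff₀ hα, hBdef]
    nlinarith
  have hvu : ‖v - u‖ ≤ 2 * Real.sqrt (μ * B) := by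
    have hdb : ‖v - u‖ ^ 2 / (4 * μ) ≤ B := by rw [hBdef]; linarith
    have hsq : ‖v - u‖ ^ 2 ≤ 4 * (μ * B) := by
      have := (div_le_iff₀ h4μ).mp hdb
      linarith [this]
    have h1 := Real.sqrt_le_sqrt hsq
    rw [Real.sqrt_sq (norm_nonneg _)] at h1
    rwa [show (4 : ℝ) * (μ * B) = 2 ^ 2 * (μ * B) by ring,
      Real.sqrt_mul (by positivity), Real.sqrt_sq (by norm_num : (0:ℝ) ≤ 2)] at h1
  have hu : ‖u‖ ≤ R := by
    have huv : u = v - (v - u) := by abel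
    rw [huv, hRdef]
    calc ‖v - (v - u)‖ ≤ ‖v‖ + ‖v - u‖ := norm_sub_le _ _
    _ ≤ B / α + 2 * Real.sqrt (μ * B) := by linarith
  have hR0 : 0 ≤ R := by
    rw [hRdef]
    have h1 : 0 ≤ B / α := div_nonneg hB0 hα.le
    have h2 := Real.sqrt_nonneg (μ * B)
    linarith
  have hCC : C₂ ≤ C₁ := by
    have h0 : (0 : En n) ∈ Metric.closedBall (0 : En n) (R + 1) := by
      simp only [Metric.mem_closedBall, dist_self]; linarith
    exact le_trans (hC₂ 0 h0) (hC₁ 0 h0)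
  have hμCC : 0 ≤ μ * (C₁ - C₂) := mul_nonneg hμ.le (by linarith)
  -- bound ‖z - u‖
  have hzu : ‖z - u‖ ≤ μ * (C₁ - C₂) + 1 := by
    by_cases hz0 : z = u
    · rw [hz0]
      simp only [sub_self, norm_zero]
      linarith
    · set s : ℝ := ‖z - u‖ with hsdef
      have hs0 : 0 < s := by
        rw [hsdef]; exact norm_pos_iff.mpr (sub_ne_zero.mpr hz0)
      set w : En n := u + s⁻¹ • (z - u) with hwdef
      have hwz : ‖w - z‖ ^ 2 = (s - 1) ^ 2 := by
        have h1 : w - z = (s⁻¹ - 1) • (z - u) := by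
          rw [hwdef]; module
        rw [h1, norm_smul, ← hsdef, Real.norm_eq_abs, mul_pow, sq_abs]
        field_simp
        ring
      have hwball : w ∈ Metric.closedBall (0 : En n) (R + 1) := by
        simp only [Metric.mem_closedBall, dist_zero_right]
        calc ‖w‖ ≤ ‖u‖ + ‖s⁻¹ • (z - u)‖ := norm_add_le _ _
        _ = ‖u‖ + 1 := by
            rw [norm_smul, Real.norm_eq_abs, abs_of_pos (inv_pos.mpr hs0), ← hsdef]
            field_simp
        _ ≤ R + 1 := by linarith
      have huball : u ∈ Metric.closedBall (0 : En n) (R + 1) := by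
        simp only [Metric.mem_closedBall, dist_zero_right]; linarith
      have hgw := hMg_le w
      rw [hwz, hMg_eq] at hgw
      have hnorm : ‖u - z‖ = s := by rw [hsdef, norm_sub_rev]
      rw [hnorm] at hgw
      have hgw' := mul_le_mul_of_nonneg_left hgw h2μ.le
      rw [mul_add, mul_add, ediv, ediv] at hgw'
      have hgwu : g w ≤ C₁ := hC₁ w hwball
      have hguL : C₂ ≤ g u := hC₂ u huball
      have hmul := mul_le_mul_of_nonneg_left (by linarith : g w - g u ≤ C₁ - C₂) hμ.le
      nlinarith [hgw', hmul]
  -- conclude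
  simp only [Metric.mem_closedBall, dist_zero_right]
  calc ‖z‖ = ‖u + (z - u)‖ := by rw [add_sub_cancel]
  _ ≤ ‖u‖ + ‖z - u‖ := norm_add_le _ _
  _ ≤ R + (μ * (C₁ - C₂) + 1) := by linarith
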